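/- Let A = 𝒜·∇ + ℬ be a first-order differential operator on L²(ℝ³)^k with smooth coefficients and sup_x ‖𝒜(x)‖ ≤ c₀, and let T = A*A, P a positive bounded function, μ ≥ 0, R = (T + P + μ)^{-1}. For any smooth real function χ, ‖R^{1/2} [T, χ] R^{1/2}‖ ≤ 2 c₀ ‖P^{-1/2}|∇χ|‖_∞. -/

import Mathlib

open ContinuousLinearMap

section Aux

variable {H : Type*} [NormedAddCommGroup H] [InnerProductSpace ℂ H] [CompleteSpace H]

local notation "⟪" x ", " y "⟫" => @inner ℂ _ _ x y

/-- Cauchy–Schwarz-type inequality at `t = 1` for a positive operator. -/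
lemma aux_pos_inner_le (P : H →L[ℂ] H) (hP : P.IsPositive) (u v : H) :
    RCLike.re ⟪P u, v⟫ ≤ (RCLike.re ⟪P u, u⟫ + RCLike.re ⟪P v, v⟫) / 2 := by
  have h0 : (0:ℝ) ≤ RCLike.re ⟪P (u - v), u - v⟫ := hP.re_inner_nonneg_left _
  have hsym : RCLike.re ⟪P v, u⟫ = RCLike.re ⟪P u, v⟫ := by
    have h1 := adjoint_inner_left P u v
    rw [hP.isSelfAdjoint.adjoint_eq] at h1
    rw [h1, inner_re_symm]
  rw [map_sub, inner_sub_left, inner_sub_right, inner_sub_right] at h0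
  simp only [map_sub] at h0
  linarith

end Aux

set_option maxHeartbeats 1000000 in
/-- Abstract form of the commutator bound
`‖R^{1/2} [T, χ] R^{1/2}‖ ≤ 2 c₀ ‖P^{-1/2} |∇χ|‖_∞` for `T = A*A`,
`R = (T + P + μ)⁻¹`. Here `X` stands for multiplication by the real function `χ`,
`G` for multiplication by `|∇χ|`, `Pinvhalf` for multiplication by `P^{-1/2}`
(so `Pinvhalf² P = P Pinvhalf² = 1` and `Pinvhalf` commutes with `G`), and the pointwise
bounds `[A,χ][A,χ]* ≤ c₀²|∇χ|²`, `[A*,χ][A*,χ]* ≤ c₀²|∇χ|²` coming from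
`sup ‖𝒜(x)‖ ≤ c₀` are taken as hypotheses. The operator norm
`‖P^{-1/2}|∇χ|‖_∞` is `‖Pinvhalf ∘L G‖`. -/
theorem stmt15 {H : Type*} [NormedAddCommGroup H] [InnerProductSpace ℂ H] [CompleteSpace H]
    (c₀ μ : ℝ) (hc₀ : 0 ≤ c₀) (hμ : 0 ≤ μ)
    (A T P R S G Pinvhalf X : H →L[ℂ] H)
    (hT : T = adjoint A ∘L A)
    (hX : IsSelfAdjoint X)
    (hP : P.IsPositive) (hG : G.IsPositive)
    (hcomm1 : (((c₀ ^ 2 : ℝ) : ℂ) • (G ∘L G)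
      - (A ∘L X - X ∘L A) ∘L adjoint (A ∘L X - X ∘L A)).IsPositive)
    (hcomm2 : (((c₀ ^ 2 : ℝ) : ℂ) • (G ∘L G)
      - (adjoint A ∘L X - X ∘L adjoint A) ∘L
          adjoint (adjoint A ∘L X - X ∘L adjoint A)).IsPositive)
    (hR1 : (T + P + ((μ : ℝ) : ℂ) • 1) ∘L R = 1)
    (hR2 : R ∘L (T + P + ((μ : ℝ) : ℂ) • 1) = 1)
    (hS : S.IsPositive) (hS2 : S ∘L S = R)
    (hPi : Pinvhalf.IsPositive)
    (hPiP : Pinvhalf ∘L Pinvhalf ∘L P = 1) (hPPi : P ∘L Pinvhalf ∘L Pinvhalf = 1)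
    (hPcomm : Pinvhalf ∘L G = G ∘L Pinvhalf) :
    ‖S ∘L (T ∘L X - X ∘L T) ∘L S‖ ≤ 2 * c₀ * ‖Pinvhalf ∘L G‖ := by
  have hXsa : adjoint X = X := isSelfAdjoint_iff'.mp hX
  have hSsa : adjoint S = S := isSelfAdjoint_iff'.mp hS.isSelfAdjoint
  have hPsa : adjoint P = P := isSelfAdjoint_iff'.mp hP.isSelfAdjoint
  have hGsa : adjoint G = G := isSelfAdjoint_iff'.mp hG.isSelfAdjoint
  have hPisa : adjoint Pinvhalf = Pinvhalf := isSelfAdjoint_iff'.mp hPi.isSelfAdjoint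
  set Q : H →L[ℂ] H := T + P + ((μ : ℝ) : ℂ) • 1 with hQ
  set C : H →L[ℂ] H := A ∘L X - X ∘L A with hC
  -- adjoint of C
  have hCadj : adjoint C = -(adjoint A ∘L X - X ∘L adjoint A) := by
    simp only [hC, map_sub, adjoint_comp, hXsa, adjoint_adjoint, neg_sub]
  -- commutator identity  [T,X] = A* C - C* A
  have hTXid : T ∘L X - X ∘L T = adjoint A ∘L C - adjoint C ∘L A := by
    rw [hCadj, hT, hC]
    simp only [← mul_def]
    noncomm_ring
  -- mul forms
  have hR1' : Q * R = 1 := hR1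
  have hR2' : R * Q = 1 := hR2
  have hS2' : S * S = R := hS2
  -- S commutes with Q
  have hSR' : S * R = R * S := by rw [← hS2', ← mul_assoc, mul_assoc]
  have hQS' : Q * S = S * Q := by
    calc Q * S = (Q * S) * 1 := (mul_one _).symm
    _ = (Q * S) * (R * Q) := by rw [hR2']
    _ = Q * ((S * R) * Q) := by simp only [mul_assoc]
    _ = Q * ((R * S) * Q) := by rw [hSR']
    _ = (Q * R) * (S * Q) := by simp only [mul_assoc]
    _ = S * Q := by rw [hR1', one_mul]
  -- re ⟪T u, u⟫ = ‖A u‖²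
  have hTre : ∀ u : H, RCLike.re (inner ℂ (T u) u) = ‖A u‖ ^ 2 := by
    intro u
    rw [hT]
    simp only [coe_comp', Function.comp_apply, adjoint_inner_left]
    exact inner_self_eq_norm_sq (A u)
  -- re ⟪P u, u⟫ ≤ re ⟪Q u, u⟫
  have hPQ : ∀ u : H, RCLike.re (inner ℂ (P u) u) ≤ RCLike.re (inner ℂ (Q u) u) := by
    intro u
    have h1 : Q u = T u + P u + (μ : ℂ) • u := by simp [hQ]
    rw [h1, inner_add_left, inner_add_left, inner_smul_left, map_add, map_add]
    have h2 : RCLike.re ((starRingEnd ℂ) (μ : ℂ) * inner ℂ u u) = μ * ‖u‖ ^ 2 := by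
      have hs := inner_self_eq_norm_sq (𝕜 := ℂ) u
      simp only [RCLike.re_to_complex] at hs ⊢
      rw [Complex.conj_ofReal, Complex.re_ofReal_mul, hs]
    have h3 := hTre u
    nlinarith [sq_nonneg ‖A u‖, mul_nonneg hμ (sq_nonneg ‖u‖)]
  -- key: ‖S y‖ ≤ ‖Pinvhalf y‖
  have hSnorm : ∀ y : H, ‖S y‖ ≤ ‖Pinvhalf y‖ := by
    intro y
    set u := R y with hu
    set v := Pinvhalf (Pinvhalf y) with hv
    have hPv : P v = y := by
      have := congrArg (fun f : H →L[ℂ] H => f y) hPPi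
      simpa [hv] using this
    have hQu : Q u = y := by
      have := congrArg (fun f : H →L[ℂ] H => f y) hR1
      simpa [hu] using this
    have hRy : RCLike.re (inner ℂ (R y) y) = ‖S y‖ ^ 2 := by
      have h1 : R y = S (S y) := by rw [← hS2]; rfl
      have h2 := adjoint_inner_left S y (S y)
      rw [hSsa] at h2
      rw [h1, h2]
      exact inner_self_eq_norm_sq (S y)
    have hkey : ‖S y‖ ^ 2 = RCLike.re (inner ℂ (P u) v) := by
      have h1 := adjoint_inner_left P v u
      rw [hPsa] at h1
      rw [h1, hPv, ← hRy, hu]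
    have hPuu : RCLike.re (inner ℂ (P u) u) ≤ ‖S y‖ ^ 2 := by
      have h1 := hPQ u
      have h2 : RCLike.re (inner ℂ (Q u) u) = ‖S y‖ ^ 2 := by
        rw [hQu, ← hRy, hu, inner_re_symm]
      linarith
    have hPvv : RCLike.re (inner ℂ (P v) v) = ‖Pinvhalf y‖ ^ 2 := by
      rw [hPv, hv]
      have h2 := adjoint_inner_right Pinvhalf y (Pinvhalf y)
      rw [hPisa] at h2
      rw [h2]
      exact inner_self_eq_norm_sq (Pinvhalf y)
    have hcs := aux_pos_inner_le P hP u v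
    have hsq : ‖S y‖ ^ 2 ≤ ‖Pinvhalf y‖ ^ 2 := by linarith
    nlinarith [norm_nonneg (S y), norm_nonneg (Pinvhalf y)]
  -- ‖A (S x)‖ ≤ ‖x‖
  have hASnorm : ∀ x : H, ‖A (S x)‖ ≤ ‖x‖ := by
    intro x
    have h1 : RCLike.re (inner ℂ (Q (S x)) (S x)) = ‖x‖ ^ 2 := by
      have h2 := adjoint_inner_left S x (Q (S x))
      rw [hSsa] at h2
      have e2 : S * (Q * S) = 1 := by
        rw [hQS', ← mul_assoc, hS2', hR2']
      have h3 : S (Q (S x)) = x := by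
        have := congrArg (fun f : H →L[ℂ] H => f x) e2
        simpa [mul_def] using this
      rw [← h2, h3]
      rw [inner_re_symm]
      exact inner_self_eq_norm_sq x
    have h4 := hPQ (S x)
    have h5 := hTre (S x)
    have h6 : Q (S x) = T (S x) + P (S x) + (μ : ℂ) • (S x) := by simp [hQ]
    have h7 : RCLike.re (inner ℂ (Q (S x)) (S x))
        = RCLike.re (inner ℂ (T (S x)) (S x)) + RCLike.re (inner ℂ (P (S x)) (S x))
          + μ * ‖S x‖ ^ 2 := by
      rw [h6, inner_add_left, inner_add_left, inner_smul_left, map_add, map_add,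
        Complex.conj_ofReal]
      have hs := inner_self_eq_norm_sq (𝕜 := ℂ) (S x)
      simp only [RCLike.re_to_complex] at hs ⊢
      rw [Complex.re_ofReal_mul, hs]
    have h8 := hP.re_inner_nonneg_left (S x)
    nlinarith [norm_nonneg (A (S x)), norm_nonneg x, mul_nonneg hμ (sq_nonneg ‖S x‖)]
  -- pointwise bound from hcomm2 : ‖C z‖ ≤ c₀ ‖G z‖
  have hDD : (adjoint A ∘L X - X ∘L adjoint A) ∘L adjoint (adjoint A ∘L X - X ∘L adjoint A)
      = adjoint C ∘L C := by
    have h1 : adjoint A ∘L X - X ∘L adjoint A = -(adjoint C) := by rw [hCadj, neg_neg]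
    have h2 : adjoint (adjoint A ∘L X - X ∘L adjoint A) = -C := by
      rw [h1, map_neg, adjoint_adjoint]
    rw [h2, h1, neg_comp, comp_neg, neg_neg]
  have hCbound : ∀ z : H, ‖C z‖ ≤ c₀ * ‖G z‖ := by
    intro z
    have h0 := hcomm2.re_inner_nonneg_left z
    rw [hDD] at h0
    have h1 : RCLike.re (inner ℂ ((adjoint C ∘L C) z) z) = ‖C z‖ ^ 2 := by
      simp only [coe_comp', Function.comp_apply, adjoint_inner_left]
      exact inner_self_eq_norm_sq (C z)
    have h2 : RCLike.re (inner ℂ ((G ∘L G) z) z) = ‖G z‖ ^ 2 := by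
      have h3 := adjoint_inner_left G z (G z)
      rw [hGsa] at h3
      simp only [coe_comp', Function.comp_apply]
      rw [h3]
      exact inner_self_eq_norm_sq (G z)
    rw [sub_apply, inner_sub_left, map_sub, smul_apply, inner_smul_left,
      Complex.conj_ofReal] at h0
    have h4 : RCLike.re (((c₀ ^ 2 : ℝ) : ℂ) * inner ℂ ((G ∘L G) z) z)
        = c₀ ^ 2 * RCLike.re (inner ℂ ((G ∘L G) z) z) := by
      simp only [RCLike.re_to_complex]
      exact Complex.re_ofReal_mul _ _
    rw [h4, h1, h2] at h0
    nlinarith [norm_nonneg (C z), norm_nonneg (G z), mul_nonneg hc₀ (norm_nonneg (G z))]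
  -- operator norm bounds
  have hSGnorm : ‖S ∘L G‖ ≤ ‖Pinvhalf ∘L G‖ := by
    refine opNorm_le_bound _ (norm_nonneg _) fun x => ?_
    calc ‖(S ∘L G) x‖ = ‖S (G x)‖ := rfl
      _ ≤ ‖Pinvhalf (G x)‖ := hSnorm _
      _ = ‖(Pinvhalf ∘L G) x‖ := rfl
      _ ≤ ‖Pinvhalf ∘L G‖ * ‖x‖ := le_opNorm _ _
  have hGSnorm : ‖G ∘L S‖ ≤ ‖Pinvhalf ∘L G‖ := by
    have h1 : adjoint (S ∘L G) = G ∘L S := by rw [adjoint_comp, hSsa, hGsa]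
    have h2 : ‖adjoint (S ∘L G)‖ = ‖S ∘L G‖ :=
      (ContinuousLinearMap.adjoint : (H →L[ℂ] H) ≃ₗᵢ⋆[ℂ] (H →L[ℂ] H)).norm_map (S ∘L G)
    rw [← h1, h2]; exact hSGnorm
  have hCSnorm : ‖C ∘L S‖ ≤ c₀ * ‖Pinvhalf ∘L G‖ := by
    refine opNorm_le_bound _ (mul_nonneg hc₀ (norm_nonneg _)) fun x => ?_
    calc ‖(C ∘L S) x‖ = ‖C (S x)‖ := rfl
      _ ≤ c₀ * ‖G (S x)‖ := hCbound _
      _ = c₀ * ‖(G ∘L S) x‖ := rfl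
      _ ≤ c₀ * (‖G ∘L S‖ * ‖x‖) := mul_le_mul_of_nonneg_left (le_opNorm _ _) hc₀
      _ ≤ c₀ * (‖Pinvhalf ∘L G‖ * ‖x‖) :=
          mul_le_mul_of_nonneg_left
            (mul_le_mul_of_nonneg_right hGSnorm (norm_nonneg _)) hc₀
      _ = c₀ * ‖Pinvhalf ∘L G‖ * ‖x‖ := by ring
  have hASopnorm : ‖A ∘L S‖ ≤ 1 := by
    refine opNorm_le_bound _ zero_le_one fun x => ?_
    calc ‖(A ∘L S) x‖ = ‖A (S x)‖ := rfl
      _ ≤ ‖x‖ := hASnorm _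
      _ = 1 * ‖x‖ := (one_mul _).symm
  have hSAadjnorm : ‖S ∘L adjoint A‖ ≤ 1 := by
    have h1 : adjoint (A ∘L S) = S ∘L adjoint A := by rw [adjoint_comp, hSsa]
    have h2 : ‖adjoint (A ∘L S)‖ = ‖A ∘L S‖ :=
      (ContinuousLinearMap.adjoint : (H →L[ℂ] H) ≃ₗᵢ⋆[ℂ] (H →L[ℂ] H)).norm_map (A ∘L S)
    rw [← h1, h2]; exact hASopnorm
  have hSCadjnorm : ‖S ∘L adjoint C‖ ≤ c₀ * ‖Pinvhalf ∘L G‖ := by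
    have h1 : adjoint (C ∘L S) = S ∘L adjoint C := by rw [adjoint_comp, hSsa]
    have h2 : ‖adjoint (C ∘L S)‖ = ‖C ∘L S‖ :=
      (ContinuousLinearMap.adjoint : (H →L[ℂ] H) ≃ₗᵢ⋆[ℂ] (H →L[ℂ] H)).norm_map (C ∘L S)
    rw [← h1, h2]; exact hCSnorm
  -- final computation
  have hfin : S ∘L (T ∘L X - X ∘L T) ∘L S
      = (S ∘L adjoint A) ∘L (C ∘L S) - (S ∘L adjoint C) ∘L (A ∘L S) := by
    rw [hTXid]
    simp only [← mul_def]
    noncomm_ring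
  rw [hfin]
  have hM : (0:ℝ) ≤ ‖Pinvhalf ∘L G‖ := norm_nonneg _
  calc ‖(S ∘L adjoint A) ∘L (C ∘L S) - (S ∘L adjoint C) ∘L (A ∘L S)‖
      ≤ ‖(S ∘L adjoint A) ∘L (C ∘L S)‖ + ‖(S ∘L adjoint C) ∘L (A ∘L S)‖ := norm_sub_le _ _
    _ ≤ ‖S ∘L adjoint A‖ * ‖C ∘L S‖ + ‖S ∘L adjoint C‖ * ‖A ∘L S‖ :=
        add_le_add (opNorm_comp_le _ _) (opNorm_comp_le _ _)
    _ ≤ 2 * c₀ * ‖Pinvhalf ∘L G‖ := by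
        nlinarith [norm_nonneg (C ∘L S), norm_nonneg (A ∘L S),
          norm_nonneg (S ∘L adjoint A), norm_nonneg (S ∘L adjoint C),
          mul_nonneg hc₀ hM]
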